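/- arXiv:0807.0696 — 2 statements merged into one kernel-verified Lean document; each statement's English description precedes it below -/
import Mathlib

section
/- Let μ ≥ 1 be a natural number, let r be a natural number, and let d, m : Fin r → ℕ satisfy d i ≥ 1 and m i ≥ 1 for all i. If ∑ i, d i * (m i)^2 = 3 * μ^2 and ∑ i, (d i : ℤ) * (m i) * (μ - m i) = 0, then r ≥ 1 and there exists an index i with m i ≥ μ. -/
theorem nfi_numerical (μ r : ℕ) (hμ : 1 ≤ μ) (d m : Fin r → ℕ)
    (hd : ∀ i, 1 ≤ d i) (hm : ∀ i, 1 ≤ m i)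
    (h1 : ∑ i, d i * (m i) ^ 2 = 3 * μ ^ 2)
    (h2 : ∑ i, (d i : ℤ) * (m i : ℤ) * ((μ : ℤ) - (m i : ℤ)) = 0) :
    1 ≤ r ∧ ∃ i, μ ≤ m i := by
  have hr : 1 ≤ r := by
    by_contra h
    have hr0 : r = 0 := by omega
    subst hr0
    rw [Fin.sum_univ_zero] at h1
    nlinarith
  refine ⟨hr, ?_⟩
  by_contra h
  push_neg at h
  have hpos : ∀ i : Fin r, 0 < (d i : ℤ) * (m i : ℤ) * ((μ : ℤ) - (m i : ℤ)) := by
    intro i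
    have h1 : (1 : ℤ) ≤ d i := by exact_mod_cast hd i
    have h2 : (1 : ℤ) ≤ m i := by exact_mod_cast hm i
    have h3 : (m i : ℤ) < μ := by exact_mod_cast h i
    exact mul_pos (mul_pos (by linarith) (by linarith)) (by linarith)
  have : 0 < ∑ i, (d i : ℤ) * (m i : ℤ) * ((μ : ℤ) - (m i : ℤ)) :=
    Finset.sum_pos (fun i _ => hpos i) (by simpa [Finset.univ_nonempty_iff] using Fin.pos_iff_nonempty.mp hr)
  omega
end

section
/- In the polynomial ring ℚ[x, y, z, t], let F = x³ + y³ + z³ + 3t³ and let q₁ = -xy + y² - xz + z² - 3xt - 3t², q₂ = x² - xy - yz + z² - 3yt - 3t², q₃ = x² + y² - xz - yz - 3zt - 3t², q₄ = -x² - y² - z² - xt - yt - zt. Then the polynomial F(q₁, q₂, q₃, q₄), obtained by substituting q₁, q₂, q₃, q₄ for x, y, z, t in F, lies in the ideal generated by F; that is, F divides q₁³ + q₂³ + q₃³ + 3q₄³. -/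
open MvPolynomial

theorem geiser_involution_preserves_cubic :
    letI x : MvPolynomial (Fin 4) ℚ := X 0
    letI y : MvPolynomial (Fin 4) ℚ := X 1
    letI z : MvPolynomial (Fin 4) ℚ := X 2
    letI t : MvPolynomial (Fin 4) ℚ := X 3
    letI F : MvPolynomial (Fin 4) ℚ := x ^ 3 + y ^ 3 + z ^ 3 + 3 * t ^ 3
    letI q₁ : MvPolynomial (Fin 4) ℚ :=
      -(x * y) + y ^ 2 - x * z + z ^ 2 - 3 * (x * t) - 3 * t ^ 2
    letI q₂ : MvPolynomial (Fin 4) ℚ :=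
      x ^ 2 - x * y - y * z + z ^ 2 - 3 * (y * t) - 3 * t ^ 2
    letI q₃ : MvPolynomial (Fin 4) ℚ :=
      x ^ 2 + y ^ 2 - x * z - y * z - 3 * (z * t) - 3 * t ^ 2
    letI q₄ : MvPolynomial (Fin 4) ℚ :=
      -(x ^ 2) - y ^ 2 - z ^ 2 - x * t - y * t - z * t
    (MvPolynomial.aeval ![q₁, q₂, q₃, q₄]) F ∈ Ideal.span {F} ∧
      F ∣ q₁ ^ 3 + q₂ ^ 3 + q₃ ^ 3 + 3 * q₄ ^ 3 := by
  set x : MvPolynomial (Fin 4) ℚ := X 0 with hx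
  set y : MvPolynomial (Fin 4) ℚ := X 1 with hy
  set z : MvPolynomial (Fin 4) ℚ := X 2 with hz
  set t : MvPolynomial (Fin 4) ℚ := X 3 with ht
  set F : MvPolynomial (Fin 4) ℚ := x ^ 3 + y ^ 3 + z ^ 3 + 3 * t ^ 3 with hF
  set q₁ : MvPolynomial (Fin 4) ℚ :=
    -(x * y) + y ^ 2 - x * z + z ^ 2 - 3 * (x * t) - 3 * t ^ 2 with h1
  set q₂ : MvPolynomial (Fin 4) ℚ :=
    x ^ 2 - x * y - y * z + z ^ 2 - 3 * (y * t) - 3 * t ^ 2 with h2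
  set q₃ : MvPolynomial (Fin 4) ℚ :=
    x ^ 2 + y ^ 2 - x * z - y * z - 3 * (z * t) - 3 * t ^ 2 with h3
  set q₄ : MvPolynomial (Fin 4) ℚ :=
    -(x ^ 2) - y ^ 2 - z ^ 2 - x * t - y * t - z * t with h4
  have hdvd : F ∣ q₁ ^ 3 + q₂ ^ 3 + q₃ ^ 3 + 3 * q₄ ^ 3 := by
    refine ⟨-(x + y + z + 3 * t) ^ 3, ?_⟩
    rw [hF, h1, h2, h3, h4]; ring
  have heval : (MvPolynomial.aeval ![q₁, q₂, q₃, q₄]) F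
      = q₁ ^ 3 + q₂ ^ 3 + q₃ ^ 3 + 3 * q₄ ^ 3 := by
    rw [hF, hx, hy, hz, ht]
    simp [Matrix.cons_val_one, Matrix.head_cons, map_ofNat]
  exact ⟨heval ▸ Ideal.mem_span_singleton.mpr hdvd, hdvd⟩
end
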